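/- In the Sergeev superalgebra S_n, for every a one has x_a² = 2 m_a², where m_a = t_{1a} + ⋯ + t_{a−1,a}, and the Jucys–Murphy elements pairwise commute: x_a x_b = x_b x_a for all a, b = 1,…,n. -/

import Mathlib

open scoped Classical

noncomputable section

/-- Generators of the Sergeev superalgebra: `T a` for `1 ≤ a ≤ n-1`, `C a` for `1 ≤ a ≤ n`. -/
inductive SGen (n : ℕ) : Type
  | T : {a : ℕ // 1 ≤ a ∧ a < n} → SGen n
  | C : {a : ℕ // 1 ≤ a ∧ a ≤ n} → SGen n

/-- The generator `t_a` in the free algebra (junk value `0` outside the valid range). -/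
def tf (n a : ℕ) : FreeAlgebra ℂ (SGen n) :=
  if h : 1 ≤ a ∧ a < n then FreeAlgebra.ι ℂ (SGen.T ⟨a, h⟩) else 0

/-- The generator `c_a` in the free algebra (junk value `0` outside the valid range). -/
def cf (n a : ℕ) : FreeAlgebra ℂ (SGen n) :=
  if h : 1 ≤ a ∧ a ≤ n then FreeAlgebra.ι ℂ (SGen.C ⟨a, h⟩) else 0

/-- Defining relations of the Sergeev superalgebra `S_n`. -/
inductive SRel (n : ℕ) : FreeAlgebra ℂ (SGen n) → FreeAlgebra ℂ (SGen n) → Prop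
  | tsq (a : ℕ) (h1 : 1 ≤ a) (h2 : a < n) : SRel n (tf n a * tf n a) 1
  | tbraid (a : ℕ) (h1 : 1 ≤ a) (h2 : a + 1 < n) :
      SRel n (tf n a * tf n (a + 1) * tf n a) (tf n (a + 1) * tf n a * tf n (a + 1))
  | tanti (a b : ℕ) (h1 : 1 ≤ a) (h2 : b < n) (h3 : a + 1 < b) :
      SRel n (tf n a * tf n b) (-(tf n b * tf n a))
  | csq (a : ℕ) (h1 : 1 ≤ a) (h2 : a ≤ n) : SRel n (cf n a * cf n a) (-1)
  | canti (a b : ℕ) (h1 : 1 ≤ a) (h2 : a ≤ n) (h3 : 1 ≤ b) (h4 : b ≤ n) (h5 : a ≠ b) :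
      SRel n (cf n a * cf n b) (-(cf n b * cf n a))
  | tc (a b : ℕ) (h1 : 1 ≤ a) (h2 : a < n) (h3 : 1 ≤ b) (h4 : b ≤ n) :
      SRel n (tf n a * cf n b) (-(cf n b * tf n a))

/-- The Sergeev superalgebra `S_n`, presented by generators and relations. -/
abbrev Sergeev (n : ℕ) : Type := RingQuot (SRel n)

/-- The generator `t_a` of `S_n`. -/
def tS (n a : ℕ) : Sergeev n := RingQuot.mkAlgHom ℂ (SRel n) (tf n a)

/-- The generator `c_a` of `S_n`. -/
def cS (n a : ℕ) : Sergeev n := RingQuot.mkAlgHom ℂ (SRel n) (cf n a)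

/-- `t_{ab} = (-1)^(b-a-1) t_{b-1} ⋯ t_{a+1} t_a t_{a+1} ⋯ t_{b-1}` for `a < b`. -/
def ttS (n a b : ℕ) : Sergeev n :=
  (-1 : ℂ) ^ (b - a - 1) •
    ((((List.range' (a + 1) (b - 1 - a)).reverse.map (tS n)).prod) * tS n a *
      (((List.range' (a + 1) (b - 1 - a)).map (tS n)).prod))

/-- `t_{ab}` for all `a ≠ b`, with `t_{ba} = -t_{ab}`. -/
def tsgn (n a b : ℕ) : Sergeev n :=
  if a < b then ttS n a b else if b < a then -ttS n b a else 0

/-- The odd Jucys–Murphy element `m_a = t_{1a} + ⋯ + t_{a-1,a}`. -/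
def mS (n a : ℕ) : Sergeev n := ∑ k ∈ Finset.Ico 1 a, tsgn n k a

/-- The (even) Jucys–Murphy element `x_a = √2 m_a c_a`. -/
def xS (n a : ℕ) : Sergeev n := (Real.sqrt 2 : ℂ) • (mS n a * cS n a)

/-- `s_a = (1/√2) t_a (c_{a+1} - c_a)`. -/
def sS (n a : ℕ) : Sergeev n := ((Real.sqrt 2 : ℂ))⁻¹ • (tS n a * (cS n (a + 1) - cS n a))

/-- The intertwiner `φ_a`. -/
def phiS (n a : ℕ) : Sergeev n :=
  sS n a * (xS n a ^ 2 - xS n (a + 1) ^ 2) + xS n a + xS n (a + 1)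
    - cS n a * cS n (a + 1) * (xS n a - xS n (a + 1))

/-- Boxes of the shifted Young diagram of a strict partition `lam` (1-based): the
box `(i,j)` is present iff `i ≤ j ≤ λ_i + i - 1`. -/
def cells (lam : List ℕ) : Set (ℕ × ℕ) :=
  {p | 1 ≤ p.1 ∧ p.1 ≤ p.2 ∧ p.2 + 1 ≤ lam.getD (p.1 - 1) 0 + p.1}

/-- A standard barred tableau with `n` boxes: a strict partition `lam` of `n`,
a standard filling `entry` of the shifted diagram of `lam` by `1, …, n`
(increasing along rows and columns), and a set `barred` of barred entries,
none of which occupies a diagonal box. -/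
structure SBT (n : ℕ) : Type where
  lam : List ℕ
  sorted : lam.Pairwise (· > ·)
  pos : ∀ p ∈ lam, 0 < p
  sum_eq : lam.sum = n
  entry : ℕ × ℕ → ℕ
  bij : Set.BijOn entry (cells lam) (Set.Icc 1 n)
  entry_junk : ∀ p, p ∉ cells lam → entry p = 0
  row_incr : ∀ p ∈ cells lam, (p.1, p.2 + 1) ∈ cells lam → entry p < entry (p.1, p.2 + 1)
  col_incr : ∀ p ∈ cells lam, (p.1 + 1, p.2) ∈ cells lam → entry p < entry (p.1 + 1, p.2)
  barred : Set ℕ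
  barred_sub : barred ⊆ Set.Icc 1 n
  barred_nondiag : ∀ p ∈ cells lam, entry p ∈ barred → p.1 ≠ p.2

/-- The box occupied by the entry `a`. -/
def SBT.box {n : ℕ} (U : SBT n) (a : ℕ) : ℕ × ℕ :=
  if h : ∃ p ∈ cells U.lam, U.entry p = a then h.choose else (0, 0)

/-- The content `j - i` of the box occupied by the entry `a`. -/
def SBT.content {n : ℕ} (U : SBT n) (a : ℕ) : ℕ := (U.box a).2 - (U.box a).1

/-- The signed content `κ_a(U) = ± √(σ(σ+1))`, negative iff `a` is barred in `U`. -/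
def SBT.kappa {n : ℕ} (U : SBT n) (a : ℕ) : ℂ :=
  (if a ∈ U.barred then -1 else 1) *
    ((Real.sqrt ((U.content a : ℝ) * ((U.content a : ℝ) + 1)) : ℝ) : ℂ)

/-- A set of boxes is (the set of boxes of) a shifted Young diagram of a strict partition. -/
def IsShifted (S : Set (ℕ × ℕ)) : Prop :=
  (∀ p ∈ S, 1 ≤ p.1 ∧ p.1 ≤ p.2) ∧
  (∀ p ∈ S, p.1 < p.2 → (p.1, p.2 - 1) ∈ S) ∧
  (∀ p ∈ S, 1 < p.1 → (p.1 - 1, p.2) ∈ S)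

/-- `q` is an addable box for the shifted diagram `S`. -/
def Addable (S : Set (ℕ × ℕ)) (q : ℕ × ℕ) : Prop := q ∉ S ∧ IsShifted (insert q S)

/-- The shape formed by the boxes of `U` holding the entries `1, …, k`. -/
def SBT.shapeAt {n : ℕ} (U : SBT n) (k : ℕ) : Set (ℕ × ℕ) :=
  {p | p ∈ cells U.lam ∧ U.entry p ≤ k}

/-- `√(σ(σ+1))` where `σ` is the content of the box `q`. -/
def sqc (q : ℕ × ℕ) : ℂ :=
  ((Real.sqrt (((q.2 - q.1 : ℕ) : ℝ) * (((q.2 - q.1 : ℕ) : ℝ) + 1)) : ℝ) : ℂ)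

/-- The signed contents of all possible barred or unbarred entries placed
in addable boxes of the shape `S` (a shape with at most `n` boxes). -/
def bVals (n : ℕ) (S : Set (ℕ × ℕ)) : Finset ℂ :=
  ((Finset.Icc 1 (n + 1) ×ˢ Finset.Icc 1 (n + 1)).filter fun q => Addable S q).biUnion
    fun q => if q.1 = q.2 then {sqc q} else {sqc q, -sqc q}

/-- The Jucys–Murphy idempotent of the sub-tableau of `U` on the entries `1, …, k`,
computed in the ambient algebra `S_N` (the inclusion `S_r → S_N` sends `t_a ↦ t_a`,
`c_a ↦ c_a` and hence `x_a ↦ x_a`, so this represents the image of `e` under it). -/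
def eAux (N : ℕ) {r : ℕ} (U : SBT r) : ℕ → Sergeev N
  | 0 => 1
  | 1 => 1
  | (k + 2) =>
      eAux N U (k + 1) *
        Polynomial.aeval (xS N (k + 2))
          (∏ b ∈ bVals r (U.shapeAt (k + 1)) \ {U.kappa (k + 2)},
            (Polynomial.C ((U.kappa (k + 2) - b)⁻¹) * (Polynomial.X - Polynomial.C b)))

/-- The element `e_U` of a standard barred tableau `U` with `r` boxes, viewed in `S_N`. -/
def eIn (N : ℕ) {r : ℕ} (U : SBT r) : Sergeev N := eAux N U r

/-- The element `e_U ∈ S_n` associated with a standard barred tableau `U` with `n` boxes. -/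
def eU {n : ℕ} (U : SBT n) : Sergeev n := eIn n U

section SergeevAux

variable {n : ℕ}

/- ### generic helpers -/

private lemma anti_symm {x y : Sergeev n} (h : x * y = -(y * x)) : y * x = -(x * y) := by
  rw [h, neg_neg]

private lemma tail_sq {x : Sergeev n} (h : x * x = 1) (r : Sergeev n) : x * (x * r) = r := by
  rw [← mul_assoc, h, one_mul]

private lemma nmul (x y : Sergeev n) : -x * y = -(x * y) := neg_mul x y

private lemma mneg (x y : Sergeev n) : x * -y = -(x * y) := mul_neg x y

private lemma tail_anti {x y : Sergeev n} (h : x * y = -(y * x)) (r : Sergeev n) :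
    x * (y * r) = -(y * (x * r)) := by
  rw [← mul_assoc, h, nmul, mul_assoc]

private lemma tail_eq {x y w : Sergeev n} (h : x * y = w) (m : Sergeev n) :
    x * (y * m) = w * m := by rw [← mul_assoc, h]

private lemma tail_eq3 {x y z w : Sergeev n} (h : x * (y * z) = w) (m : Sergeev n) :
    x * (y * (z * m)) = w * m := by
  rw [← mul_assoc y z m, ← mul_assoc x (y * z) m, h]

private lemma tail_braid {x y : Sergeev n} (h : x * y * x = y * x * y) (m : Sergeev n) :
    x * (y * (x * m)) = y * (x * (y * m)) := by
  rw [← mul_assoc, ← mul_assoc, h, mul_assoc, mul_assoc]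

/- ### basic relations -/

private lemma rel_tsq {a : ℕ} (h1 : 1 ≤ a) (h2 : a < n) : tS n a * tS n a = 1 := by
  have h := RingQuot.mkAlgHom_rel ℂ (SRel.tsq (n := n) a h1 h2)
  simpa [tS, map_mul, map_one] using h

private lemma rel_tbraid {a : ℕ} (h1 : 1 ≤ a) (h2 : a + 1 < n) :
    tS n a * tS n (a + 1) * tS n a = tS n (a + 1) * tS n a * tS n (a + 1) := by
  have h := RingQuot.mkAlgHom_rel ℂ (SRel.tbraid (n := n) a h1 h2)
  simpa [tS, map_mul] using h

private lemma rel_tanti {a b : ℕ} (h1 : 1 ≤ a) (h2 : b < n) (h3 : a + 1 < b) :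
    tS n a * tS n b = -(tS n b * tS n a) := by
  have h := RingQuot.mkAlgHom_rel ℂ (SRel.tanti (n := n) a b h1 h2 h3)
  simpa [tS, map_mul, map_neg] using h

private lemma rel_csq {a : ℕ} (h1 : 1 ≤ a) (h2 : a ≤ n) : cS n a * cS n a = -1 := by
  have h := RingQuot.mkAlgHom_rel ℂ (SRel.csq (n := n) a h1 h2)
  simpa [cS, map_mul, map_neg, map_one] using h

private lemma rel_canti {a b : ℕ} (h1 : 1 ≤ a) (h2 : a ≤ n) (h3 : 1 ≤ b) (h4 : b ≤ n)
    (h5 : a ≠ b) : cS n a * cS n b = -(cS n b * cS n a) := by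
  have h := RingQuot.mkAlgHom_rel ℂ (SRel.canti (n := n) a b h1 h2 h3 h4 h5)
  simpa [cS, map_mul, map_neg] using h

private lemma rel_tc {a b : ℕ} (h1 : 1 ≤ a) (h2 : a < n) (h3 : 1 ≤ b) (h4 : b ≤ n) :
    tS n a * cS n b = -(cS n b * tS n a) := by
  have h := RingQuot.mkAlgHom_rel ℂ (SRel.tc (n := n) a b h1 h2 h3 h4)
  simpa [tS, cS, map_mul, map_neg] using h

/- ### recursion for ttS -/

private lemma nsmul (e : ℂ) (x : Sergeev n) : (-e) • x = -(e • x) := neg_smul e x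

private lemma ttS_base (a : ℕ) : ttS n a (a + 1) = tS n a := by
  have e1 : a + 1 - 1 - a = 0 := by omega
  have e2 : a + 1 - a - 1 = 0 := by omega
  rw [ttS, e1, e2]
  simp

private lemma ttS_succ {a b : ℕ} (hab : a < b) :
    ttS n a (b + 1) = -(tS n b * (ttS n a b * tS n b)) := by
  have e1 : b + 1 - 1 - a = (b - 1 - a) + 1 := by omega
  have e2 : b + 1 - a - 1 = (b - a - 1) + 1 := by omega
  have e3 : b - a - 1 = b - 1 - a := by omega
  have e4 : a + 1 + 1 * (b - 1 - a) = b := by omega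
  rw [ttS, ttS, e1, e2, e3, List.range'_concat, e4]
  simp only [List.reverse_append, List.reverse_cons, List.reverse_nil, List.nil_append,
    List.map_cons, List.map_nil, List.map_append, List.prod_cons, List.prod_append,
    List.prod_nil, List.map_reverse, pow_succ, mul_one, one_mul, mul_neg_one, neg_smul,
    smul_mul_assoc, mul_smul_comm]
  rw [nsmul]
  congr 1
  simp [mul_assoc]


/- ### a distant generator anticommutes with `t_{ab}` -/

private lemma t_tt {a b r0 : ℕ} (h1 : 1 ≤ a) (hr : 1 ≤ r0) (hrn : r0 < n) (hab : a < b) :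
    b ≤ n → (r0 + 2 ≤ a ∨ b + 1 ≤ r0) →
      tS n r0 * ttS n a b = -(ttS n a b * tS n r0) := by
  induction b, hab using Nat.le_induction with
  | base =>
    intro hbn hcond
    rw [ttS_base]
    rcases hcond with h | h
    · exact rel_tanti hr (by omega) (by omega)
    · exact anti_symm (rel_tanti h1 hrn (by omega))
  | succ b hb ih =>
    intro hbn hcond
    have ih' := ih (by omega) (by omega)
    have htb : tS n r0 * tS n b = -(tS n b * tS n r0) := by
      rcases hcond with h | h
      · exact rel_tanti hr (by omega) (by omega)
      · exact anti_symm (rel_tanti (by omega) hrn (by omega))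
    rw [ttS_succ (by omega : a < b)]
    simp only [nmul, mneg, neg_neg]
    rw [tail_anti htb (ttS n a b * tS n b), tail_anti ih' (tS n b), htb]
    simp only [mneg, neg_neg, mul_assoc]

/- ### squares -/

private lemma sq_tt {a b : ℕ} (h1 : 1 ≤ a) (hab : a < b) :
    b ≤ n → ttS n a b * ttS n a b = 1 := by
  induction b, hab using Nat.le_induction with
  | base => intro hbn; rw [ttS_base]; exact rel_tsq h1 (by omega)
  | succ b hb ih =>
    intro hbn
    have ih' := ih (by omega)
    have ht : tS n b * tS n b = 1 := rel_tsq (by omega) (by omega)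
    rw [ttS_succ (by omega : a < b)]
    simp only [nmul, mneg, neg_neg]
    calc (tS n b * (ttS n a b * tS n b)) * (tS n b * (ttS n a b * tS n b))
        = tS n b * (ttS n a b * (tS n b * (tS n b * (ttS n a b * tS n b)))) := by
          simp only [mul_assoc]
      _ = tS n b * (ttS n a b * (ttS n a b * tS n b)) := by
          rw [tail_sq ht (ttS n a b * tS n b)]
      _ = tS n b * tS n b := by rw [tail_sq ih' (tS n b)]
      _ = 1 := ht

/- ### braid relation between `t_b` and `t_{ab}` -/

private lemma braid_tt {a b : ℕ} (h1 : 1 ≤ a) (hab : a < b) :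
    b < n → ∀ m : Sergeev n,
      tS n b * (ttS n a b * (tS n b * m)) = ttS n a b * (tS n b * (ttS n a b * m)) := by
  induction b, hab using Nat.le_induction with
  | base =>
    intro hbn m
    rw [ttS_base]
    exact tail_braid (rel_tbraid h1 hbn).symm m
  | succ b hb ih =>
    intro hbn m
    have hs : tS n b * tS n b = 1 := rel_tsq (by omega) (by omega)
    have hbr : ∀ m' : Sergeev n, tS n b * (tS n (b + 1) * (tS n b * m')) =
        tS n (b + 1) * (tS n b * (tS n (b + 1) * m')) :=
      tail_braid (rel_tbraid (by omega) hbn)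
    have hwX : tS n (b + 1) * ttS n a b = -(ttS n a b * tS n (b + 1)) :=
      t_tt h1 (by omega) hbn (by omega) (by omega) (Or.inr (by omega))
    have hXw := anti_symm hwX
    have ih' := ih (by omega)
    rw [ttS_succ (by omega : a < b)]
    simp only [nmul, mneg, neg_neg, mul_assoc]
    rw [hbr (ttS n a b * (tS n b * m))]
    rw [tail_anti hXw (tS n b * (tS n (b + 1) * (ttS n a b * (tS n b * m))))]
    simp only [mneg, neg_neg]
    rw [tail_anti hwX (tS n b * m)]
    simp only [mneg, neg_neg]
    rw [← ih' (tS n (b + 1) * (tS n b * m))]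
    rw [hbr (ttS n a b * (tS n b * (tS n (b + 1) * (tS n b * m))))]
    rw [tail_anti hwX (tS n b * (tS n (b + 1) * (tS n b * m)))]
    simp only [mneg, neg_neg]
    rw [← hbr (tS n b * m), tail_sq hs m]

/- ### conjugation relations M1 and M2 -/

private lemma m1 {k a b : ℕ} (hk : 1 ≤ k) (hka : k < a) (hab : a < b) :
    b ≤ n → ttS n a b * (ttS n k b * ttS n a b) = -(ttS n k a) := by
  induction b, hab using Nat.le_induction with
  | base =>
    intro hbn
    have ht : tS n a * tS n a = 1 := rel_tsq (by omega) (by omega)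
    rw [ttS_base, ttS_succ hka]
    simp only [nmul, mneg, neg_neg, mul_assoc]
    rw [ht, mul_one, tail_sq ht (ttS n k a)]
  | succ b hb ih =>
    intro hbn
    have ih' := ih (by omega)
    have htb : tS n b * tS n b = 1 := rel_tsq (by omega) (by omega)
    have hzt : tS n b * ttS n k a = -(ttS n k a * tS n b) :=
      t_tt hk (by omega) (by omega) hka (by omega) (Or.inr (by omega))
    rw [ttS_succ (by omega : a < b), ttS_succ (by omega : k < b)]
    simp only [nmul, mneg, neg_neg, mul_assoc]
    rw [tail_sq htb (ttS n k b * (tS n b * (tS n b * (ttS n a b * tS n b)))),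
      tail_sq htb (ttS n a b * tS n b)]
    rw [tail_eq3 ih' (tS n b), nmul]
    simp only [mneg, neg_neg]
    rw [tail_anti hzt (tS n b), htb]
    simp only [mneg, neg_neg, mul_one]

private lemma m2 {k a b : ℕ} (hk : 1 ≤ k) (hka : k < a) (hab : a < b) :
    b ≤ n → ttS n k b * (ttS n k a * ttS n k b) = ttS n a b := by
  induction b, hab using Nat.le_induction with
  | base =>
    intro hbn
    have ht : tS n a * tS n a = 1 := rel_tsq (by omega) (by omega)
    have hz : ttS n k a * ttS n k a = 1 := sq_tt hk hka (by omega)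
    have bt := braid_tt hk hka (by omega : a < n)
    rw [ttS_base, ttS_succ hka]
    simp only [nmul, mneg, neg_neg, mul_assoc]
    rw [bt (ttS n k a * (tS n a * (ttS n k a * tS n a)))]
    rw [tail_sq hz (tS n a * (ttS n k a * tS n a))]
    rw [tail_sq ht (ttS n k a * tS n a)]
    rw [tail_sq hz (tS n a)]
  | succ b hb ih =>
    intro hbn
    have ih' := ih (by omega)
    have htb : tS n b * tS n b = 1 := rel_tsq (by omega) (by omega)
    have hzt : tS n b * ttS n k a = -(ttS n k a * tS n b) :=
      t_tt hk (by omega) (by omega) hka (by omega) (Or.inr (by omega))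
    rw [ttS_succ (by omega : a < b), ttS_succ (by omega : k < b)]
    simp only [nmul, mneg, neg_neg, mul_assoc]
    rw [tail_anti hzt (tS n b * (ttS n k b * tS n b))]
    simp only [mneg, neg_neg]
    rw [tail_sq htb (ttS n k b * tS n b)]
    rw [tail_eq3 ih' (tS n b)]

/- ### derived quadratic relations -/

private lemma d1 {k a b : ℕ} (hk : 1 ≤ k) (hka : k < a) (hab : a < b) (hbn : b ≤ n) :
    ttS n k a * ttS n k b = ttS n k b * ttS n a b := by
  have hv : ttS n k b * ttS n k b = 1 := sq_tt hk (by omega) hbn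
  calc ttS n k a * ttS n k b = 1 * (ttS n k a * ttS n k b) := (one_mul _).symm
    _ = (ttS n k b * ttS n k b) * (ttS n k a * ttS n k b) := by rw [hv]
    _ = ttS n k b * (ttS n k b * (ttS n k a * ttS n k b)) := by rw [mul_assoc]
    _ = ttS n k b * ttS n a b := by rw [m2 hk hka hab hbn]

private lemma d2' {k a b : ℕ} (hk : 1 ≤ k) (hka : k < a) (hab : a < b) (hbn : b ≤ n) :
    ttS n a b * ttS n k b = -(ttS n k a * ttS n a b) := by
  have hu : ttS n a b * ttS n a b = 1 := sq_tt (by omega) hab hbn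
  calc ttS n a b * ttS n k b = ttS n a b * (ttS n k b * (ttS n a b * ttS n a b)) := by
        rw [hu, mul_one]
    _ = (ttS n a b * (ttS n k b * ttS n a b)) * ttS n a b := by simp only [mul_assoc]
    _ = (-(ttS n k a)) * ttS n a b := by rw [m1 hk hka hab hbn]
    _ = -(ttS n k a * ttS n a b) := nmul _ _

private lemma d2 {k a b : ℕ} (hk : 1 ≤ k) (hka : k < a) (hab : a < b) (hbn : b ≤ n) :
    ttS n k b * ttS n k a = -(ttS n k a * ttS n a b) := by
  have hv : ttS n k b * ttS n k b = 1 := sq_tt hk (by omega) hbn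
  have step1 : ttS n k b * ttS n k a = ttS n a b * ttS n k b := by
    calc ttS n k b * ttS n k a
        = ttS n k b * (ttS n k a * (ttS n k b * ttS n k b)) := by rw [hv, mul_one]
      _ = (ttS n k b * (ttS n k a * ttS n k b)) * ttS n k b := by simp only [mul_assoc]
      _ = ttS n a b * ttS n k b := by rw [m2 hk hka hab hbn]
  exact step1.trans (d2' hk hka hab hbn)

private lemma d5 {k a b : ℕ} (hk : 1 ≤ k) (hka : k < a) (hab : a < b) (hbn : b ≤ n) :
    ttS n a b * ttS n k a = -(ttS n k b * ttS n a b) := by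
  have hu : ttS n a b * ttS n a b = 1 := sq_tt (by omega) hab hbn
  have h3 : ttS n k b * ttS n a b = -(ttS n a b * ttS n k a) := by
    calc ttS n k b * ttS n a b = 1 * (ttS n k b * ttS n a b) := (one_mul _).symm
      _ = (ttS n a b * ttS n a b) * (ttS n k b * ttS n a b) := by rw [hu]
      _ = ttS n a b * (ttS n a b * (ttS n k b * ttS n a b)) := by rw [mul_assoc]
      _ = ttS n a b * (-(ttS n k a)) := by rw [m1 hk hka hab hbn]
      _ = -(ttS n a b * ttS n k a) := mneg _ _
  rw [h3, neg_neg]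

/- ### the special disjoint case `(p,q)`, `(r,q+1)` -/

private lemma sc {p r q : ℕ} (hp : 1 ≤ p) (hr : 1 ≤ r) (hpq : p < q) (hrq : r < q)
    (hpr : p ≠ r) (hqn : q < n) :
    ttS n p q * ttS n r (q + 1) = -(ttS n r (q + 1) * ttS n p q) := by
  have hqn' : q ≤ n := le_of_lt hqn
  have hsq_v : ttS n r q * ttS n r q = 1 := sq_tt hr hrq hqn'
  have bt := braid_tt hr hrq hqn
  have hb1 : tS n q * (ttS n r q * tS n q) = ttS n r q * (tS n q * ttS n r q) := by
    have h := bt 1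
    simpa only [mul_one] using h
  have key : ttS n p q * (tS n q * (ttS n r q * tS n q)) =
      -(tS n q * (ttS n r q * (tS n q * ttS n p q))) := by
    rcases lt_or_gt_of_ne hpr with hc | hc
    · -- p < r : z = ttS p r, triple (p, r, q)
      have m1' := m1 hp hc hrq hqn'
      have hzt : tS n q * ttS n p r = -(ttS n p r * tS n q) :=
        t_tt hp (by omega) hqn hc (by omega) (Or.inr (by omega))
      have hzt' := anti_symm hzt
      have huv : ttS n p q * ttS n r q = -(ttS n r q * ttS n p r) := by
        calc ttS n p q * ttS n r q
            = 1 * (ttS n p q * ttS n r q) := (one_mul _).symm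
          _ = (ttS n r q * ttS n r q) * (ttS n p q * ttS n r q) := by rw [hsq_v]
          _ = ttS n r q * (ttS n r q * (ttS n p q * ttS n r q)) := by simp only [mul_assoc]
          _ = ttS n r q * (-(ttS n p r)) := by rw [m1']
          _ = -(ttS n r q * ttS n p r) := mneg _ _
      have hzv : ttS n p r * ttS n r q = -(ttS n r q * ttS n p q) := by
        have h2 := d2' hp hc hrq hqn'
        rw [h2, neg_neg]
      calc ttS n p q * (tS n q * (ttS n r q * tS n q))
          = ttS n p q * (ttS n r q * (tS n q * ttS n r q)) := by rw [hb1]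
        _ = (ttS n p q * ttS n r q) * (tS n q * ttS n r q) := by rw [← mul_assoc]
        _ = -((ttS n r q * ttS n p r) * (tS n q * ttS n r q)) := by rw [huv, nmul]
        _ = -(ttS n r q * (ttS n p r * (tS n q * ttS n r q))) := by simp only [mul_assoc]
        _ = -(ttS n r q * (-(tS n q * (ttS n p r * ttS n r q)))) := by
            rw [tail_anti hzt' (ttS n r q)]
        _ = ttS n r q * (tS n q * (ttS n p r * ttS n r q)) := by rw [mneg, neg_neg]
        _ = ttS n r q * (tS n q * (-(ttS n r q * ttS n p q))) := by rw [hzv]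
        _ = -(ttS n r q * (tS n q * (ttS n r q * ttS n p q))) := by rw [mneg, mneg]
        _ = -(tS n q * (ttS n r q * (tS n q * ttS n p q))) := by rw [← bt (ttS n p q)]
    · -- r < p : z = ttS r p, triple (r, p, q)
      have hzt : tS n q * ttS n r p = -(ttS n r p * tS n q) :=
        t_tt hr (by omega) hqn hc (by omega) (Or.inr (by omega))
      have hzt' := anti_symm hzt
      have m2' := m2 hr hc hpq hqn'
      have huv : ttS n p q * ttS n r q = ttS n r q * ttS n r p := by
        calc ttS n p q * ttS n r q
            = (ttS n r q * (ttS n r p * ttS n r q)) * ttS n r q := by rw [m2']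
          _ = ttS n r q * (ttS n r p * (ttS n r q * ttS n r q)) := by simp only [mul_assoc]
          _ = ttS n r q * ttS n r p := by rw [hsq_v, mul_one]
      have hzv : ttS n r p * ttS n r q = ttS n r q * ttS n p q := d1 hr hc hpq hqn'
      calc ttS n p q * (tS n q * (ttS n r q * tS n q))
          = ttS n p q * (ttS n r q * (tS n q * ttS n r q)) := by rw [hb1]
        _ = (ttS n p q * ttS n r q) * (tS n q * ttS n r q) := by rw [← mul_assoc]
        _ = (ttS n r q * ttS n r p) * (tS n q * ttS n r q) := by rw [huv]
        _ = ttS n r q * (ttS n r p * (tS n q * ttS n r q)) := by simp only [mul_assoc]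
        _ = ttS n r q * (-(tS n q * (ttS n r p * ttS n r q))) := by
            rw [tail_anti hzt' (ttS n r q)]
        _ = -(ttS n r q * (tS n q * (ttS n r p * ttS n r q))) := mneg _ _
        _ = -(ttS n r q * (tS n q * (ttS n r q * ttS n p q))) := by rw [hzv]
        _ = -(tS n q * (ttS n r q * (tS n q * ttS n p q))) := by rw [← bt (ttS n p q)]
  rw [ttS_succ hrq]
  simp only [nmul, mneg, neg_neg]
  rw [key]
  simp only [mneg, neg_neg, mul_assoc]

/- ### disjoint `t_{ab}`'s anticommute -/

private lemma dis' : ∀ s : ℕ, ∀ p q r : ℕ, 1 ≤ p → p < q → 1 ≤ r → r < s → s ≤ n → q < s →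
    p ≠ r → q ≠ r → ttS n p q * ttS n r s = -(ttS n r s * ttS n p q) := by
  intro s
  induction s using Nat.strong_induction_on with
  | _ s ih =>
  intro p q r hp hpq hr hrs hsn hqs hpr hqr
  rcases eq_or_lt_of_le (Nat.succ_le_of_lt hrs) with hc | hc
  · -- s = r + 1
    rw [← hc, ttS_base]
    exact anti_symm (t_tt hp (by omega) (by omega) hpq (by omega) (Or.inr (by omega)))
  · obtain ⟨s', rfl⟩ : ∃ s', s = s' + 1 := ⟨s - 1, by omega⟩
    by_cases hq : q = s'
    · subst hq
      exact sc hp hr hpq (by omega) hpr (by omega)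
    · have ht : tS n s' * ttS n p q = -(ttS n p q * tS n s') :=
        t_tt hp (by omega) (by omega) hpq (by omega) (Or.inr (by omega))
      have ih' := ih s' (by omega) p q r hp hpq hr (by omega) (by omega) (by omega) hpr hqr
      rw [ttS_succ (by omega : r < s')]
      simp only [mneg, nmul, neg_neg]
      rw [tail_anti (anti_symm ht) (ttS n r s' * tS n s')]
      rw [tail_anti ih' (tS n s')]
      rw [anti_symm ht]
      simp only [mneg, neg_neg, mul_assoc]

private lemma dis {p q r s : ℕ} (hp : 1 ≤ p) (hpq : p < q) (hr2 : 1 ≤ r) (hrs : r < s)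
    (hqn : q ≤ n) (hsn : s ≤ n) (hpr : p ≠ r) (hps : p ≠ s) (hqr : q ≠ r) (hqs : q ≠ s) :
    ttS n p q * ttS n r s = -(ttS n r s * ttS n p q) := by
  rcases lt_or_gt_of_ne hqs with h | h
  · exact dis' s p q r hp hpq hr2 hrs hsn h hpr hqr
  · exact anti_symm (dis' q r s p hr2 hrs hp hpq hqn h hpr.symm hps.symm)

/- ### `t_{ab}` anticommutes with every `c_j` -/

private lemma ttc {a b j : ℕ} (h1 : 1 ≤ a) (hj : 1 ≤ j) (hjn : j ≤ n) (hab : a < b) :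
    b ≤ n → ttS n a b * cS n j = -(cS n j * ttS n a b) := by
  induction b, hab using Nat.le_induction with
  | base =>
    intro hbn
    rw [ttS_base]
    exact rel_tc h1 (by omega) hj hjn
  | succ b hb ih =>
    intro hbn
    have ih' := ih (by omega)
    have htc : tS n b * cS n j = -(cS n j * tS n b) := rel_tc (by omega) (by omega) hj hjn
    rw [ttS_succ (by omega : a < b)]
    simp only [nmul, mneg, neg_neg, mul_assoc]
    rw [htc]
    simp only [mneg, neg_neg]
    rw [tail_anti ih' (tS n b)]
    simp only [mneg, neg_neg]
    rw [tail_anti htc (ttS n a b * tS n b)]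
    simp only [mneg, neg_neg, mul_assoc]

/- ### sums: the odd JM elements -/

private lemma ssum_mul (s : Finset ℕ) (f : ℕ → Sergeev n) (x : Sergeev n) :
    (∑ k ∈ s, f k) * x = ∑ k ∈ s, f k * x := Finset.sum_mul s f x

private lemma smul_sum (s : Finset ℕ) (f : ℕ → Sergeev n) (x : Sergeev n) :
    x * (∑ k ∈ s, f k) = ∑ k ∈ s, x * f k := Finset.mul_sum s f x

private lemma ssum_neg (s : Finset ℕ) (f : ℕ → Sergeev n) :
    (∑ k ∈ s, -(f k)) = -(∑ k ∈ s, f k) := Finset.sum_neg_distrib f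

private lemma mS_tt (a : ℕ) : mS n a = ∑ k ∈ Finset.Ico 1 a, ttS n k a := by
  simp only [mS]
  refine Finset.sum_congr rfl fun k hk => ?_
  simp only [tsgn, if_pos (Finset.mem_Ico.mp hk).2]

private lemma mc {a j : ℕ} (ha : a ≤ n) (hj : 1 ≤ j) (hjn : j ≤ n) :
    mS n a * cS n j = -(cS n j * mS n a) := by
  rw [mS_tt, ssum_mul, smul_sum, ← ssum_neg]
  refine Finset.sum_congr rfl fun k hk => ?_
  obtain ⟨hk1, hk2⟩ := Finset.mem_Ico.mp hk
  exact ttc hk1 hj hjn hk2 ha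

private lemma manti {a b : ℕ} (hab : a < b) (hbn : b ≤ n) :
    mS n a * mS n b = -(mS n b * mS n a) := by
  have key : mS n a * mS n b + mS n b * mS n a = 0 := by
    rw [mS_tt a, mS_tt b]
    rw [ssum_mul, ssum_mul]
    have e1 : ∀ k : ℕ, ttS n k a * (∑ l ∈ Finset.Ico 1 b, ttS n l b) =
        ∑ l ∈ Finset.Ico 1 b, ttS n k a * ttS n l b := fun k => smul_sum _ _ _
    have e2 : ∀ l : ℕ, ttS n l b * (∑ k ∈ Finset.Ico 1 a, ttS n k a) =
        ∑ k ∈ Finset.Ico 1 a, ttS n l b * ttS n k a := fun l => smul_sum _ _ _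
    rw [Finset.sum_congr rfl fun k _ => e1 k, Finset.sum_congr rfl fun l _ => e2 l,
      Finset.sum_comm (s := Finset.Ico 1 b) (t := Finset.Ico 1 a), ← Finset.sum_add_distrib]
    refine Finset.sum_eq_zero fun k hk => ?_
    rw [← Finset.sum_add_distrib]
    obtain ⟨hk1, hk2⟩ := Finset.mem_Ico.mp hk
    have hkb : k ∈ Finset.Ico 1 b := Finset.mem_Ico.mpr ⟨hk1, by omega⟩
    have hae : a ∈ (Finset.Ico 1 b).erase k :=
      Finset.mem_erase.mpr ⟨by omega, Finset.mem_Ico.mpr ⟨by omega, hab⟩⟩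
    rw [← Finset.add_sum_erase _ _ hkb, ← Finset.add_sum_erase _ _ hae]
    have hrest : ∑ l ∈ ((Finset.Ico 1 b).erase k).erase a,
        (ttS n k a * ttS n l b + ttS n l b * ttS n k a) = 0 := by
      refine Finset.sum_eq_zero fun l hl => ?_
      obtain ⟨hla, hl'⟩ := Finset.mem_erase.mp hl
      obtain ⟨hlk, hl''⟩ := Finset.mem_erase.mp hl'
      obtain ⟨hl1, hl2⟩ := Finset.mem_Ico.mp hl''
      rw [dis hk1 hk2 hl1 hl2 (by omega) hbn (Ne.symm hlk) (by omega) (Ne.symm hla) (by omega)]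
      exact neg_add_cancel _
    rw [hrest, add_zero]
    rw [d1 hk1 hk2 hab hbn, d2 hk1 hk2 hab hbn, d5 hk1 hk2 hab hbn]
    abel
  exact eq_neg_of_add_eq_zero_left key


private lemma manti' {a b : ℕ} (hab : a ≠ b) (han : a ≤ n) (hbn : b ≤ n) :
    mS n a * mS n b = -(mS n b * mS n a) := by
  rcases lt_or_gt_of_ne hab with h | h
  · exact manti h hbn
  · exact anti_symm (manti h han)

private lemma ssmulmul (e f : ℂ) (x y : Sergeev n) :
    (e • x) * (f • y) = (e * f) • (x * y) := smul_mul_smul_comm e x f y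

end SergeevAux

/-- In the Sergeev superalgebra `S_n`, one has `x_a² = 2 m_a²`, and the Jucys–Murphy
elements pairwise commute. -/
theorem statement1 (n a b : ℕ) (ha1 : 1 ≤ a) (ha2 : a ≤ n) (hb1 : 1 ≤ b) (hb2 : b ≤ n) :
    xS n a * xS n a = (2 : ℂ) • (mS n a * mS n a) ∧
    xS n a * xS n b = xS n b * xS n a := by
  have hsqrt : (Real.sqrt 2 : ℂ) * (Real.sqrt 2 : ℂ) = (2 : ℂ) := by
    rw [← Complex.ofReal_mul, Real.mul_self_sqrt (by norm_num : (0:ℝ) ≤ 2)]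
    norm_num
  constructor
  · simp only [xS]
    rw [ssmulmul, hsqrt]
    congr 1
    have hca : cS n a * cS n a = -1 := rel_csq ha1 ha2
    have hmc : mS n a * cS n a = -(cS n a * mS n a) := mc ha2 ha1 ha2
    calc (mS n a * cS n a) * (mS n a * cS n a)
        = mS n a * (cS n a * (mS n a * cS n a)) := by simp only [mul_assoc]
      _ = mS n a * (-(mS n a * (cS n a * cS n a))) := by
          rw [tail_anti (anti_symm hmc) (cS n a)]
      _ = mS n a * (-(mS n a * (-1))) := by rw [hca]
      _ = mS n a * mS n a := by simp only [mneg, neg_neg, mul_one]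
  · by_cases hab : a = b
    · subst hab; rfl
    · simp only [xS]
      rw [ssmulmul, ssmulmul]
      congr 1
      have hmanti : mS n a * mS n b = -(mS n b * mS n a) := manti' hab ha2 hb2
      have hmcb : cS n a * mS n b = -(mS n b * cS n a) := anti_symm (mc hb2 ha1 ha2)
      have hmca : cS n b * mS n a = -(mS n a * cS n b) := anti_symm (mc ha2 hb1 hb2)
      have hcc : cS n a * cS n b = -(cS n b * cS n a) := rel_canti ha1 ha2 hb1 hb2 hab
      have lhs : (mS n a * cS n a) * (mS n b * cS n b) =
          -((mS n b * mS n a) * (cS n b * cS n a)) := by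
        calc (mS n a * cS n a) * (mS n b * cS n b)
            = mS n a * (cS n a * (mS n b * cS n b)) := by simp only [mul_assoc]
          _ = mS n a * (-(mS n b * (cS n a * cS n b))) := by
              rw [tail_anti hmcb (cS n b)]
          _ = -(mS n a * (mS n b * (cS n a * cS n b))) := mneg _ _
          _ = -((mS n a * mS n b) * (cS n a * cS n b)) := by rw [← mul_assoc]
          _ = -((-(mS n b * mS n a)) * (cS n a * cS n b)) := by rw [hmanti]
          _ = (mS n b * mS n a) * (cS n a * cS n b) := by rw [nmul, neg_neg]
          _ = (mS n b * mS n a) * (-(cS n b * cS n a)) := by rw [hcc]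
          _ = -((mS n b * mS n a) * (cS n b * cS n a)) := mneg _ _
      have rhs : (mS n b * cS n b) * (mS n a * cS n a) =
          -((mS n b * mS n a) * (cS n b * cS n a)) := by
        calc (mS n b * cS n b) * (mS n a * cS n a)
            = mS n b * (cS n b * (mS n a * cS n a)) := by simp only [mul_assoc]
          _ = mS n b * (-(mS n a * (cS n b * cS n a))) := by
              rw [tail_anti hmca (cS n a)]
          _ = -(mS n b * (mS n a * (cS n b * cS n a))) := mneg _ _
          _ = -((mS n b * mS n a) * (cS n b * cS n a)) := by rw [← mul_assoc]
      rw [lhs, rhs]
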